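/- Scalar converse C-D-J bound via probability measure: under the same hypotheses, E[f(X)] ≤ f(E[X]) + ((β-α)/2)·((M+m)E[X] - Mm) + (1/2)·(α·E[X²] - β·E[X]²). -/

import Mathlib

open MeasureTheory

/-- Scalar converse Choi-Davis-Jensen bound via a probability measure supported in
`[m, M]`:
`E[f X] ≤ f (E[X]) + ((β-α)/2) * ((M+m) E[X] - M m) + (1/2) * (α E[X^2] - β E[X]^2)`. -/
theorem scalar_converse_CDJ_bound (m M α β : ℝ) (hmM : m < M)
    (μ : Measure ℝ) [IsProbabilityMeasure μ] (hsupp : μ (Set.Icc m M)ᶜ = 0)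
    (f : ℝ → ℝ)
    (hf : ∀ x, HasDerivAt f (deriv f x) x)
    (hf' : ∀ x, HasDerivAt (deriv f) (deriv (deriv f) x) x)
    (hαβ : ∀ x ∈ Set.Icc m M,
      α ≤ deriv (deriv f) x ∧ deriv (deriv f) x ≤ β) :
    (∫ t, f t ∂μ)
      ≤ f (∫ t, t ∂μ) + ((β - α) / 2) * ((M + m) * (∫ t, t ∂μ) - M * m)
          + (1 / 2) * (α * (∫ t, t ^ 2 ∂μ) - β * (∫ t, t ∂μ) ^ 2) := by
  have hMm : (0:ℝ) < M - m := sub_pos.mpr hmM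
  have hae : ∀ᵐ t ∂μ, t ∈ Set.Icc m M := by
    rw [MeasureTheory.ae_iff]
    simpa [Set.compl_def] using hsupp
  have hfc : Continuous f :=
    continuous_iff_continuousAt.mpr fun x => (hf x).differentiableAt.continuousAt
  -- the auxiliary convex functions
  set g : ℝ → ℝ := fun x => f x - α / 2 * x ^ 2 with hg_def
  set ψ : ℝ → ℝ := fun x => β / 2 * x ^ 2 - f x with hψ_def
  have hgc : Continuous g := by
    apply hfc.sub
    continuity
  have hψc : Continuous ψ := by
    apply Continuous.sub _ hfc
    continuity
  have hconvg : ConvexOn ℝ (Set.Icc m M) g := by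
    apply convexOn_of_hasDerivWithinAt2_nonneg (convex_Icc m M) hgc.continuousOn
      (f' := fun x => deriv f x - α * x) (f'' := fun x => deriv (deriv f) x - α)
    · intro x hx
      exact (((hf x).sub (by simpa using ((hasDerivAt_pow 2 x).const_mul (α/2)))).hasDerivWithinAt).congr_deriv (by ring)
    · intro x hx
      exact (((hf' x).sub ((hasDerivAt_id x).const_mul α)).hasDerivWithinAt).congr_deriv (by ring)
    · intro x hx
      have := (hαβ x (interior_subset hx)).1
      linarith
  have hconvψ : ConvexOn ℝ (Set.Icc m M) ψ := by
    apply convexOn_of_hasDerivWithinAt2_nonneg (convex_Icc m M) hψc.continuousOn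
      (f' := fun x => β * x - deriv f x) (f'' := fun x => β - deriv (deriv f) x)
    · intro x hx
      exact ((((hasDerivAt_pow 2 x).const_mul (β/2)).sub (hf x)).hasDerivWithinAt).congr_deriv (by ring)
    · intro x hx
      exact ((((hasDerivAt_id x).const_mul β).sub (hf' x)).hasDerivWithinAt).congr_deriv (by ring)
    · intro x hx
      have := (hαβ x (interior_subset hx)).2
      linarith
  -- chord inequality for a convex function on [m, M]
  have chord : ∀ (h : ℝ → ℝ), ConvexOn ℝ (Set.Icc m M) h → ∀ x ∈ Set.Icc m M,
      h x ≤ ((M - x) * h m + (x - m) * h M) / (M - m) := by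
    intro h hc x hx
    have ha : (0:ℝ) ≤ (M - x) / (M - m) := div_nonneg (by linarith [hx.2]) hMm.le
    have hb : (0:ℝ) ≤ (x - m) / (M - m) := div_nonneg (by linarith [hx.1]) hMm.le
    have hab : (M - x) / (M - m) + (x - m) / (M - m) = 1 := by
      field_simp
      ring
    have := hc.2 (Set.left_mem_Icc.mpr hmM.le) (Set.right_mem_Icc.mpr hmM.le) ha hb hab
    have hx' : ((M - x) / (M - m)) • m + ((x - m) / (M - m)) • M = x := by
      simp only [smul_eq_mul]
      field_simp
      ring
    rw [hx'] at this
    simp only [smul_eq_mul] at this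
    calc h x ≤ (M - x) / (M - m) * h m + (x - m) / (M - m) * h M := this
      _ = ((M - x) * h m + (x - m) * h M) / (M - m) := by ring
  -- integrability
  have hmeas_id : AEStronglyMeasurable (fun t : ℝ => t) μ :=
    continuous_id.aestronglyMeasurable
  have hbound : ∀ (h : ℝ → ℝ), Continuous h → Integrable h μ := by
    intro h hc
    obtain ⟨C, hC⟩ := (isCompact_Icc (a := m) (b := M)).exists_bound_of_continuousOn
      hc.continuousOn
    exact Integrable.mono' (integrable_const C) hc.aestronglyMeasurable
      (hae.mono fun t ht => hC t ht)
  have hint_f : Integrable f μ := hbound f hfc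
  have hint_id : Integrable (fun t : ℝ => t) μ := hbound _ continuous_id
  have hint_sq : Integrable (fun t : ℝ => t ^ 2) μ := hbound _ (by continuity)
  set E : ℝ := ∫ t, t ∂μ with hE_def
  set E2 : ℝ := ∫ t, t ^ 2 ∂μ with hE2_def
  -- E ∈ [m, M]
  have hEm : m ≤ E := by
    have : (∫ _t, m ∂μ) ≤ ∫ t, t ∂μ :=
      integral_mono_ae (integrable_const m) hint_id (hae.mono fun t ht => ht.1)
    simpa using this
  have hEM : E ≤ M := by
    have : (∫ t, t ∂μ) ≤ ∫ _t, M ∂μ :=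
      integral_mono_ae hint_id (integrable_const M) (hae.mono fun t ht => ht.2)
    simpa using this
  have hEmem : E ∈ Set.Icc m M := ⟨hEm, hEM⟩
  -- integrate the chord bound for g
  set q : ℝ := (g M - g m) / (M - m) with hq_def
  set r : ℝ := (M * g m - m * g M) / (M - m) with hr_def
  have hpt : ∀ᵐ t ∂μ, f t ≤ α / 2 * t ^ 2 + (q * t + r) := by
    refine hae.mono fun t ht => ?_
    have := chord g hconvg t ht
    have hgt : g t = f t - α / 2 * t ^ 2 := rfl
    rw [hgt] at this
    have h2 : f t ≤ α / 2 * t ^ 2 + ((M - t) * g m + (t - m) * g M) / (M - m) := by linarith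
    calc f t ≤ α / 2 * t ^ 2 + ((M - t) * g m + (t - m) * g M) / (M - m) := h2
      _ = α / 2 * t ^ 2 + (q * t + r) := by
          rw [hq_def, hr_def]
          field_simp
          ring
  have hint_rhs : Integrable (fun t => α / 2 * t ^ 2 + (q * t + r)) μ :=
    ((hint_sq.const_mul _).add ((hint_id.const_mul _).add (integrable_const r)))
  have hIf : (∫ t, f t ∂μ) ≤ α / 2 * E2 + (q * E + r) := by
    have hmono := integral_mono_ae hint_f hint_rhs hpt
    have i1 : (∫ t, (q * t + r) ∂μ) = q * E + r := by
      rw [integral_add (hint_id.const_mul q) (integrable_const r), integral_const_mul,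
        integral_const]
      simp [hE_def]
    have i2 : (∫ t, (α / 2 * t ^ 2 + (q * t + r)) ∂μ) = α / 2 * E2 + (q * E + r) := by
      rw [integral_add (hint_sq.const_mul (α / 2))
        (show Integrable (fun t : ℝ => q * t + r) μ from
          (hint_id.const_mul q).add (integrable_const r)), integral_const_mul, i1]
    calc (∫ t, f t ∂μ) ≤ ∫ t, (α / 2 * t ^ 2 + (q * t + r)) ∂μ := hmono
      _ = α / 2 * E2 + (q * E + r) := i2
  -- chord bound for ψ at E
  have hψE := chord ψ hconvψ E hEmem
  clear_value E E2
  have hψm : ψ m = β / 2 * m ^ 2 - f m := rfl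
  have hψM : ψ M = β / 2 * M ^ 2 - f M := rfl
  have hψE' : ψ E = β / 2 * E ^ 2 - f E := rfl
  have hgm : g m = f m - α / 2 * m ^ 2 := rfl
  have hgM : g M = f M - α / 2 * M ^ 2 := rfl
  clear_value g ψ q r
  -- combine
  have key : q * E + r ≤ f E - α / 2 * E ^ 2
      + (β - α) / 2 * ((M + m) * E - M * m - E ^ 2) := by
    rw [hψE', hψm, hψM] at hψE
    have hψE2 : (β / 2 * E ^ 2 - f E) * (M - m)
        ≤ (M - E) * (β / 2 * m ^ 2 - f m) + (E - m) * (β / 2 * M ^ 2 - f M) :=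
      (le_div_iff₀ hMm).mp hψE
    have hqr : q * E + r = ((f M - α / 2 * M ^ 2 - (f m - α / 2 * m ^ 2)) * E
        + (M * (f m - α / 2 * m ^ 2) - m * (f M - α / 2 * M ^ 2))) / (M - m) := by
      rw [hq_def, hr_def, hgm, hgM]
      field_simp
    rw [hqr, div_le_iff₀ hMm]
    linarith [hψE2]
  have : (∫ t, f t ∂μ) ≤ α / 2 * E2 + f E - α / 2 * E ^ 2
      + (β - α) / 2 * ((M + m) * E - M * m - E ^ 2) := by linarith
  linarith [this]
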